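/- For any two transformation data (f, γ₁, γ₂, γ₃) and (f̄, γ̄₁, γ̄₂, γ̄₃) and any pair of coefficient functions (A, C₂): applying the transformation rules (t1), (t4) with (f, γ₁, γ₂, γ₃) and then applying them with (f̄, γ̄₁, γ̄₂, γ̄₃) produces the same pair of coefficient functions as the single application with the composite datum (f̄∘f, γ̄₁∘f + γ₁, γ̄₂∘f + γ₂, γ̄₃∘f + γ₃); moreover the identity datum (id, 0, 0, 0) acts trivially. Hence rule (t4) defines a consistent group action on pairs (A, C₂). -/
import Mathlib


/-- Transformation rule (t1) for the non-minimal coupling coefficient `A`: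
`Ā(f x) = exp(−(n−2)·γ₁ x)·A x`. -/
noncomputable def transA (n : ℕ) (f : ℝ ≃ ℝ) (γ₁ A : ℝ → ℝ) : ℝ → ℝ :=
  fun y => Real.exp (-((n : ℝ) - 2) * γ₁ (f.symm y)) * A (f.symm y)

/-- Transformation rule (t4) for the coefficient `C₂`:
`C̄₂(f x)·f' x = exp(−(n−2)·γ₁ x)·(C₂ x + A x·((n−1)·γ₂' x − γ₃' x))`. -/
noncomputable def transC2 (n : ℕ) (f : ℝ ≃ ℝ) (γ₁ γ₂ γ₃ A C₂ : ℝ → ℝ) : ℝ → ℝ :=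
  fun y => Real.exp (-((n : ℝ) - 2) * γ₁ (f.symm y)) *
    (C₂ (f.symm y) + A (f.symm y) *
      (((n : ℝ) - 1) * deriv γ₂ (f.symm y) - deriv γ₃ (f.symm y)))
    / deriv (⇑f) (f.symm y)

/-- Rules (t1) and (t4) define a consistent group action on pairs `(A, C₂)`:
applying them with `(f, γ₁, γ₂, γ₃)` and then with `(f̄, γ̄₁, γ̄₂, γ̄₃)` agrees
with the single application of the composite datum
`(f̄∘f, γ̄₁∘f + γ₁, γ̄₂∘f + γ₂, γ̄₃∘f + γ₃)`, and `(id, 0, 0, 0)` acts trivially. -/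
theorem transC2_group_action (n : ℕ) (hn : 3 ≤ n)
    (f fb : ℝ ≃ ℝ) (γ₁ γ₂ γ₃ g₁ g₂ g₃ : ℝ → ℝ)
    (hf : Differentiable ℝ ⇑f) (hf' : ∀ x, deriv (⇑f) x ≠ 0)
    (hfb : Differentiable ℝ ⇑fb) (hfb' : ∀ x, deriv (⇑fb) x ≠ 0)
    (hγ₁ : Differentiable ℝ γ₁) (hγ₂ : Differentiable ℝ γ₂) (hγ₃ : Differentiable ℝ γ₃)
    (hg₁ : Differentiable ℝ g₁) (hg₂ : Differentiable ℝ g₂) (hg₃ : Differentiable ℝ g₃)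
    (A C₂ : ℝ → ℝ) :
    (transA n fb g₁ (transA n f γ₁ A) = transA n (f.trans fb) (g₁ ∘ ⇑f + γ₁) A ∧
      transC2 n fb g₁ g₂ g₃ (transA n f γ₁ A) (transC2 n f γ₁ γ₂ γ₃ A C₂)
        = transC2 n (f.trans fb) (g₁ ∘ ⇑f + γ₁) (g₂ ∘ ⇑f + γ₂) (g₃ ∘ ⇑f + γ₃) A C₂) ∧
    (transA n (Equiv.refl ℝ) 0 A = A ∧
      transC2 n (Equiv.refl ℝ) 0 0 0 A C₂ = C₂) := by
  have hderiv : ∀ (g γ : ℝ → ℝ), Differentiable ℝ g → Differentiable ℝ γ → ∀ x,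
      deriv (g ∘ ⇑f + γ) x = deriv g (f x) * deriv (⇑f) x + deriv γ x := by
    intro g γ hg hγ x
    exact (((hg (f x)).hasDerivAt.comp x (hf x).hasDerivAt).add (hγ x).hasDerivAt).deriv
  have hcomp : ∀ x, deriv (⇑(f.trans fb)) x = deriv (⇑fb) (f x) * deriv (⇑f) x := by
    intro x
    have : ⇑(f.trans fb) = ⇑fb ∘ ⇑f := Equiv.coe_trans f fb
    rw [this]
    exact (((hfb (f x)).hasDerivAt).comp x (hf x).hasDerivAt).deriv
  refine ⟨⟨?_, ?_⟩, ?_, ?_⟩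
  · funext y
    simp only [transA, Equiv.symm_trans_apply, Pi.add_apply, Function.comp_apply,
      Equiv.apply_symm_apply]
    rw [mul_add, Real.exp_add]
    ring
  · funext y
    set x := f.symm (fb.symm y) with hx
    have hfy : f x = fb.symm y := f.apply_symm_apply _
    simp only [transC2, transA, Equiv.symm_trans_apply, Pi.add_apply, Function.comp_apply,
      ← hx, hcomp, hderiv g₂ γ₂ hg₂ hγ₂, hderiv g₃ γ₃ hg₃ hγ₃, hfy]
    rw [show -((n:ℝ) - 2) * (g₁ (fb.symm y) + γ₁ x)
        = -((n:ℝ) - 2) * g₁ (fb.symm y) + -((n:ℝ) - 2) * γ₁ x from by ring, Real.exp_add]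
    have h1 : deriv (⇑f) x ≠ 0 := hf' x
    have h2 : deriv (⇑fb) (f x) ≠ 0 := hfb' (f x)
    rw [hfy] at h2
    field_simp
    ring
  · funext y
    simp [transA]
  · funext y
    simp [transC2, deriv_id', Pi.zero_def]
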